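/- Let k ≥ 8, n ≥ k², and f : {0,1}^n → {0,1} be defined by f(x) = 1 iff x, viewed cyclically, contains a contiguous substring z of length k² with g(z) = 1 (g as in the pattern: block 1 = 110^{k-2}, first five bits of blocks 2..k are 1, last three bits of block k are 1). Then the 1-sensitivity of f satisfies s¹(f) ≥ 6k−2; in particular s¹(f) = Ω(k). -/

import Mathlib

/-- Flip the `i`-th bit of `x`. -/
def flipBit {n : ℕ} (x : Fin n → Bool) (i : Fin n) : Fin n → Bool :=
  fun j => if j = i then !x j else x j

/-- Flip all bits of `x` in the block `B`. -/
def flipSet {n : ℕ} (x : Fin n → Bool) (B : Finset (Fin n)) : Fin n → Bool :=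
  fun j => if j ∈ B then !x j else x j

/-- Sensitivity of `f` at the input `x`. -/
def sensAt {n : ℕ} (f : (Fin n → Bool) → Bool) (x : Fin n → Bool) : ℕ :=
  (Finset.univ.filter fun i => f (flipBit x i) ≠ f x).card

/-- Sensitivity of `f`. -/
def sens {n : ℕ} (f : (Fin n → Bool) → Bool) : ℕ :=
  Finset.univ.sup fun x => sensAt f x

/-- 0-sensitivity of `f`: max sensitivity over inputs where `f` is 0. -/
def sens0 {n : ℕ} (f : (Fin n → Bool) → Bool) : ℕ :=
  (Finset.univ.filter fun x => f x = false).sup fun x => sensAt f x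

/-- 1-sensitivity of `f`: max sensitivity over inputs where `f` is 1. -/
def sens1 {n : ℕ} (f : (Fin n → Bool) → Bool) : ℕ :=
  (Finset.univ.filter fun x => f x = true).sup fun x => sensAt f x

/-- Block sensitivity of `f` at `x`: the largest number of pairwise disjoint
nonempty blocks each of whose flips changes the value of `f` at `x`. -/
noncomputable def bsensAt {n : ℕ} (f : (Fin n → Bool) → Bool) (x : Fin n → Bool) : ℕ :=
  sSup {r : ℕ | ∃ B : Fin r → Finset (Fin n),
    (∀ j, (B j).Nonempty ∧ f (flipSet x (B j)) ≠ f x) ∧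
    ∀ j j', j ≠ j' → Disjoint (B j) (B j')}

/-- Block sensitivity of `f`. -/
noncomputable def bsens {n : ℕ} (f : (Fin n → Bool) → Bool) : ℕ :=
  Finset.univ.sup fun x => bsensAt f x

/-- The pattern predicate defining `g : {0,1}^{k²} → {0,1}`, reading a word as
`k` blocks of length `k`: block 1 equals `110^{k-2}`, the first five bits of
blocks `2..k` are 1, and the last three bits of block `k` are 1. -/
def GPat (k : ℕ) (z : ℕ → Bool) : Prop :=
  (∀ t < k, z t = decide (t < 2)) ∧
  (∀ j, 1 ≤ j → j < k → ∀ t < 5, z (j * k + t) = true) ∧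
  (∀ t, k - 3 ≤ t → t < k → z ((k - 1) * k + t) = true)

open Classical in
/-- The cyclically invariant function `f : {0,1}^n → {0,1}` with
`f(x) = 1` iff `x`, viewed cyclically, contains a contiguous length-`k²`
substring on which `g` evaluates to 1. -/
noncomputable def cycPatFn (k n : ℕ) (hn : 0 < n) : (Fin n → Bool) → Bool :=
  fun x => decide (∃ ℓ : ℕ, GPat k (fun t => x ⟨(ℓ + t) % n, Nat.mod_lt _ hn⟩))



def pat (k m : ℕ) : Bool :=
  if m < k then decide (m < 2)
  else if m < k * k then decide (m % k < 5 ∨ k * k - 3 ≤ m)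
  else false

lemma pat_lt_two {k m : ℕ} (hk : 2 ≤ k) (h : m < 2) : pat k m = true := by
  unfold pat; rw [if_pos (by omega)]; exact decide_eq_true h

lemma pat_mid {k m : ℕ} (h1 : k ≤ m) (h2 : m < k*k) (h3 : m % k < 5) : pat k m = true := by
  unfold pat; rw [if_neg (by omega), if_pos h2, decide_eq_true_eq]; exact Or.inl h3

lemma pat_tail {k m : ℕ} (h8 : 8 ≤ k) (h1 : k*k - 3 ≤ m) (h2 : m < k*k) : pat k m = true := by
  have hk8 : 8*k ≤ k*k := Nat.mul_le_mul_right k h8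
  unfold pat; rw [if_neg (by omega), if_pos h2, decide_eq_true_eq]; exact Or.inr h1

lemma pat_lt_kk {k m : ℕ} (h : pat k m = true) : m < k*k := by
  unfold pat at h
  split_ifs at h with h1 h2
  · have : k ≤ k*k := Nat.le_mul_of_pos_left k (by omega)
    omega
  · exact h2


lemma pat_b1_false {k m : ℕ} (h2 : 2 ≤ m) (hk : m < k) : pat k m = false := by
  unfold pat; rw [if_pos hk, decide_eq_false_iff_not]; omega

lemma pat_cases {k m : ℕ} (h : pat k m = true) :
    m < 2 ∨ (k ≤ m ∧ m < k*k ∧ m % k < 5) ∨ (k*k - 3 ≤ m ∧ m < k*k) := by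
  unfold pat at h
  split_ifs at h with h1 h2
  · rw [decide_eq_true_eq] at h; exact Or.inl h
  · rw [decide_eq_true_eq] at h
    rcases h with h | h
    · exact Or.inr (Or.inl ⟨by omega, h2, h⟩)
    · exact Or.inr (Or.inr ⟨h, h2⟩)


lemma ycongr {n : ℕ} (y : Fin n → Bool) {a b : ℕ} (ha : a < n) (hb : b < n) (hab : a = b) :
    y ⟨a, ha⟩ = y ⟨b, hb⟩ := by subst hab; rfl

lemma flip_eq_of_ne {n : ℕ} (x : Fin n → Bool) (i j : Fin n) (h : j ≠ i) :
    flipBit x i j = x j := by simp [flipBit, h]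

lemma flip_self {n : ℕ} (x : Fin n → Bool) (i : Fin n) : flipBit x i i = !x i := by
  simp [flipBit]

lemma gpat_ones {k n : ℕ} (h8 : 8 ≤ k) (hpos : 0 < n) (y : Fin n → Bool) (ℓ : ℕ)
    (hG : GPat k (fun t => y ⟨(ℓ + t) % n, Nat.mod_lt _ hpos⟩)) :
    ∀ m, pat k m = true → ∀ (hp : (ℓ + m) % n < n), y ⟨(ℓ + m) % n, hp⟩ = true := by
  obtain ⟨h1, h2, h3⟩ := hG
  intro m hm hp
  have hk0 : 0 < k := by omega
  have hk8 : 8*k ≤ k*k := Nat.mul_le_mul_right k h8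
  by_cases ht3 : k*k - 3 ≤ m
  · have hmkk := pat_lt_kk hm
    have hsub : (k-1)*k = k*k - k := Nat.sub_one_mul k k
    have h3' := h3 (m - (k-1)*k) (by omega) (by omega)
    have he : (k-1)*k + (m - (k-1)*k) = m := by omega
    exact (ycongr y hp (Nat.mod_lt _ hpos) (by rw [he])).trans h3'
  · rcases pat_cases hm with hc | ⟨hc1, hc2, hc3⟩ | ⟨hc1, hc2⟩
    · exact (h1 m (by omega)).trans (decide_eq_true hc)
    · have hdm : k * (m / k) + m % k = m := Nat.div_add_mod m k
      have hj1 : 1 ≤ m / k := (Nat.one_le_div_iff hk0).2 hc1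
      have hjk : m / k < k := (Nat.div_lt_iff_lt_mul hk0).2 hc2
      have h2' := h2 (m / k) hj1 hjk (m % k) hc3
      have he : m / k * k + m % k = m := by rw [mul_comm]; exact hdm
      exact (ycongr y hp (Nat.mod_lt _ hpos) (by rw [he])).trans h2'
    · exact absurd hc1 ht3

lemma zlem {k n : ℕ} (h8 : 8 ≤ k) (hkk : k*k ≤ n) (i : Fin n)
    (hi2 : 2 ≤ i.val) (hik : i.val < k) (m : ℕ) (hm : m < k*k) :
    ∃ d, d < k - 2 ∧ m + d < k*k ∧ ∃ (h : m + d < n),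
      flipBit (fun j : Fin n => pat k j.val) i ⟨m + d, h⟩ = true := by
  have hk8 : 8*k ≤ k*k := Nat.mul_le_mul_right k h8
  have hk0 : 0 < k := by omega
  have hyp : ∀ (p : ℕ) (hp : p < n), pat k p = true → p ≠ i.val →
      flipBit (fun j : Fin n => pat k j.val) i ⟨p, hp⟩ = true := by
    intro p hp hpat hne
    have hne' : (⟨p, hp⟩ : Fin n) ≠ i := fun h => hne (congrArg Fin.val h)
    rw [flip_eq_of_ne _ _ _ hne']
    exact hpat
  by_cases h2m : m < 2
  · exact ⟨0, by omega, by omega, by omega,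
      hyp m (by omega) (pat_lt_two (by omega) (by omega)) (by omega)⟩
  by_cases hmk : m < k
  · by_cases hmi : m ≤ i.val
    · refine ⟨i.val - m, by omega, by omega, by omega, ?_⟩
      have hfi : (⟨m + (i.val - m), by omega⟩ : Fin n) = i :=
        Fin.ext (show m + (i.val - m) = i.val by omega)
      rw [hfi, flip_self]
      have hpf : pat k i.val = false := pat_b1_false hi2 hik
      simp [hpf]
    · refine ⟨k - m, by omega, by omega, by omega, ?_⟩
      refine (ycongr _ (by omega) (show k < n by omega) (by omega)).trans
        (hyp k (by omega) (pat_mid le_rfl (by omega) ?_) (by omega))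
      rw [Nat.mod_self]; omega
  · have hdm : k * (m / k) + m % k = m := Nat.div_add_mod m k
    have hrk : m % k < k := Nat.mod_lt _ hk0
    have hq1 : 1 ≤ m / k := (Nat.one_le_div_iff hk0).2 (by omega)
    have hqk : m / k < k := (Nat.div_lt_iff_lt_mul hk0).2 hm
    by_cases hr5 : m % k < 5
    · exact ⟨0, by omega, by omega, by omega,
        hyp m (by omega) (pat_mid (by omega) (by omega) (by omega)) (by omega)⟩
    by_cases htail : k*k - 3 ≤ m
    · exact ⟨0, by omega, by omega, by omega,
        hyp m (by omega) (pat_tail h8 (by omega) (by omega)) (by omega)⟩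
    by_cases hql : m / k ≤ k - 2
    · have hb : k * (m / k) ≤ k * (k-2) := Nat.mul_le_mul_left k hql
      have hc : k * (k-2) + k * 2 = k * k := by rw [← Nat.mul_add]; congr 1; omega
      have hmod : (k * (m / k) + k) % k = 0 := by
        rw [← Nat.mul_succ]; exact Nat.mul_mod_right k (m / k + 1)
      refine ⟨k - m % k, by omega, by omega, by omega, ?_⟩
      refine (ycongr _ (by omega) (show k * (m / k) + k < n by omega)
        (show m + (k - m % k) = k * (m / k) + k by omega)).trans
        (hyp _ _ (pat_mid (by omega) (by omega) (by omega)) (by omega))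
    · have hqe : m / k = k - 1 := by omega
      have hc : k * (k-1) + k = k * k := by rw [← Nat.mul_succ]; congr 1; omega
      have hkq : k * (m / k) = k * (k-1) := by rw [hqe]
      refine ⟨k*k - 3 - m, by omega, by omega, by omega, ?_⟩
      refine (ycongr _ (by omega) (show k*k - 3 < n by omega)
        (show m + (k*k - 3 - m) = k*k - 3 by omega)).trans
        (hyp _ _ (pat_tail h8 (by omega) (by omega)) (by omega))

lemma flip_one_false {k n : ℕ} (h8 : 8 ≤ k) (hkk : k*k ≤ n) (hpos : 0 < n)
    (i : Fin n) (hi : pat k i.val = true) :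
    cycPatFn k n hpos (flipBit (fun j : Fin n => pat k j.val) i) = false := by
  classical
  set x : Fin n → Bool := fun j : Fin n => pat k j.val with hxdef
  set y := flipBit x i with hydef
  simp only [cycPatFn, decide_eq_false_iff_not]
  rintro ⟨ℓ, hG⟩
  have hone := gpat_ones h8 hpos y ℓ hG
  set S : Finset (Fin n) := Finset.univ.filter (fun j => pat k j.val = true) with hS
  have hiS : i ∈ S := Finset.mem_filter.2 ⟨Finset.mem_univ _, hi⟩
  have hyi : y i = false := by rw [hydef, flip_self]; simp only [hxdef]; simp [hi]
  set φ : Fin n → Fin n := fun j => ⟨(ℓ + j.val) % n, Nat.mod_lt _ hpos⟩ with hφ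
  have hmap : ∀ j ∈ S, φ j ∈ S.erase i := by
    intro j hj
    have hpj : pat k j.val = true := (Finset.mem_filter.1 hj).2
    have hyφ : y (φ j) = true := hone j.val hpj _
    have hne : φ j ≠ i := by
      intro hcontra; rw [hcontra, hyi] at hyφ; cases hyφ
    refine Finset.mem_erase.2 ⟨hne, Finset.mem_filter.2 ⟨Finset.mem_univ _, ?_⟩⟩
    rw [hydef, flip_eq_of_ne _ _ _ hne] at hyφ
    exact hyφ
  have hinj : Set.InjOn φ S := by
    intro a _ b _ hab
    have h1 : (ℓ + a.val) % n = (ℓ + b.val) % n := congrArg Fin.val hab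
    have h2 : a.val ≡ b.val [MOD n] := Nat.ModEq.add_left_cancel' ℓ h1
    exact Fin.ext (by rwa [Nat.ModEq, Nat.mod_eq_of_lt a.isLt, Nat.mod_eq_of_lt b.isLt] at h2)
  have hcard := Finset.card_le_card_of_injOn φ hmap hinj
  rw [Finset.card_erase_of_mem hiS] at hcard
  have h0 : (⟨0, hpos⟩ : Fin n) ∈ S :=
    Finset.mem_filter.2 ⟨Finset.mem_univ _, pat_lt_two (by omega) (show (0:ℕ) < 2 by omega)⟩
  have := Finset.card_pos.2 ⟨_, h0⟩
  omega

lemma flip_zero_false {k n : ℕ} (h8 : 8 ≤ k) (hkk : k*k ≤ n) (hpos : 0 < n)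
    (i : Fin n) (hi2 : 2 ≤ i.val) (hik : i.val < k) :
    cycPatFn k n hpos (flipBit (fun j : Fin n => pat k j.val) i) = false := by
  classical
  set x : Fin n → Bool := fun j : Fin n => pat k j.val with hxdef
  set y := flipBit x i with hydef
  have hk8 : 8*k ≤ k*k := Nat.mul_le_mul_right k h8
  simp only [cycPatFn, decide_eq_false_iff_not]
  rintro ⟨ℓ, h1, h2, h3⟩
  set s := (ℓ + 2) % n with hs
  have hsn : s < n := Nat.mod_lt _ hpos
  have hkey : ∀ d, (ℓ + (2 + d)) % n = (s + d) % n := by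
    intro d
    rw [← Nat.add_assoc, Nat.add_mod (ℓ+2) d, ← hs, Nat.add_mod s d, Nat.mod_eq_of_lt hsn]
  have hyub : ∀ (p : ℕ) (hp : p < n), y ⟨p, hp⟩ = true → p < k*k := by
    intro p hp hy
    by_cases hpi : (⟨p, hp⟩ : Fin n) = i
    · have : p = i.val := congrArg Fin.val hpi
      omega
    · rw [hydef, flip_eq_of_ne x i _ hpi] at hy
      exact pat_lt_kk hy
  by_cases hskk : s < k*k
  · obtain ⟨d, hd, hdkk, hdn, hyd⟩ := zlem h8 hkk i hi2 hik s hskk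
    have hz := h1 (2 + d) (by omega)
    have e : (ℓ + (2 + d)) % n = s + d := by
      rw [hkey d, Nat.mod_eq_of_lt (by omega)]
    have hv : y ⟨s + d, hdn⟩ = decide (2 + d < 2) :=
      (ycongr y hdn (Nat.mod_lt _ hpos) e.symm).trans hz
    have hyd' : y ⟨s + d, hdn⟩ = true := hyd
    rw [hyd'] at hv
    exact absurd (of_decide_eq_true hv.symm) (by omega)
  · push_neg at hskk
    have hblk : ∀ t, t < 5 →
        y ⟨(ℓ + (1*k + t)) % n, Nat.mod_lt _ hpos⟩ = true := by
      intro t ht; exact h2 1 le_rfl (by omega) t ht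
    have hwrap : n ≤ s + (k - 2) := by
      by_contra hcon
      push_neg at hcon
      have e : (ℓ + (1*k + 0)) % n = s + (k-2) := by
        have e1 : ℓ + (1*k + 0) = ℓ + (2 + (k-2)) := by omega
        rw [e1, hkey, Nat.mod_eq_of_lt hcon]
      have hub := hyub _ hcon ((ycongr y hcon (Nat.mod_lt _ hpos) e.symm).trans (hblk 0 (by omega)))
      omega
    set p1 := s + (k - 2) - n with hp1
    have hp13 : p1 ≤ k - 3 := by omega
    have hblk' : ∀ t, t < 5 → ∃ (hpt : p1 + t < n), y ⟨p1 + t, hpt⟩ = true := by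
      intro t ht
      have hpt : p1 + t < n := by omega
      have e : (ℓ + (1*k + t)) % n = p1 + t := by
        have e1 : ℓ + (1*k + t) = ℓ + (2 + (k - 2 + t)) := by omega
        rw [e1, hkey]
        have e2 : s + (k - 2 + t) = n + (p1 + t) := by omega
        rw [e2, Nat.add_mod_left, Nat.mod_eq_of_lt hpt]
      exact ⟨hpt, (ycongr y hpt (Nat.mod_lt _ hpos) e.symm).trans (hblk t ht)⟩
    have hydown : ∀ (p : ℕ) (hp : p < n), p < k → y ⟨p, hp⟩ = true → (p < 2 ∨ p = i.val) := by
      intro p hp hpk hy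
      by_cases hpi : (⟨p, hp⟩ : Fin n) = i
      · exact Or.inr (congrArg Fin.val hpi)
      · rw [hydef, flip_eq_of_ne x i _ hpi] at hy
        have hy'' : pat k p = true := hy
        rcases pat_cases hy'' with h | ⟨h1', _⟩ | ⟨h1', h2'⟩ <;> omega
    obtain ⟨hn0, hy0⟩ := hblk' 0 (by omega)
    obtain ⟨hn1, hy1⟩ := hblk' 1 (by omega)
    obtain ⟨hn2, hy2⟩ := hblk' 2 (by omega)
    obtain ⟨hn3, hy3⟩ := hblk' 3 (by omega)
    have c0 := hydown _ hn0 (by omega) hy0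
    have c1 := hydown _ hn1 (by omega) hy1
    have c2 := hydown _ hn2 (by omega) hy2
    have hp10 : p1 = 0 ∧ i.val = 2 := by omega
    have c3 := hydown _ hn3 (by omega) hy3
    omega

lemma jk_mod (j k t : ℕ) : (j * k + t) % k = t % k := by
  rw [add_comm]; exact Nat.add_mul_mod_self_right t j k

lemma card_pat {k : ℕ} (h8 : 8 ≤ k) :
    ((Finset.range (k*k)).filter (fun m => pat k m = true)).card = 5*k := by
  classical
  have hk8 : 8*k ≤ k*k := Nat.mul_le_mul_right k h8
  have hk0 : 0 < k := by omega
  have hmid : ∀ j t : ℕ, 1 ≤ j → j < k → t < 5 → (k ≤ j*k + t ∧ j*k + t < k*k - 3) := by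
    intro j t hj1 hjk ht
    have ha : 1*k ≤ j*k := Nat.mul_le_mul_right k hj1
    have hb : (j+1)*k ≤ k*k := Nat.mul_le_mul_right k (by omega)
    rw [add_one_mul] at hb
    omega
  have hset : (Finset.range (k*k)).filter (fun m => pat k m = true)
      = (Finset.range 2 ∪ (Finset.Ico 1 k ×ˢ Finset.range 5).image (fun p => p.1 * k + p.2))
          ∪ Finset.Ico (k*k - 3) (k*k) := by
    ext m
    simp only [Finset.mem_filter, Finset.mem_range, Finset.mem_union, Finset.mem_image,
      Finset.mem_Ico, Finset.mem_product]
    constructor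
    · rintro ⟨hmk, hp⟩
      by_cases ht : k*k - 3 ≤ m
      · exact Or.inr ⟨ht, hmk⟩
      rcases pat_cases hp with h | ⟨h1, h2, h3⟩ | ⟨h1, h2⟩
      · exact Or.inl (Or.inl h)
      · left; right
        refine ⟨(m / k, m % k), ⟨⟨(Nat.one_le_div_iff hk0).2 h1, (Nat.div_lt_iff_lt_mul hk0).2 h2⟩, h3⟩, ?_⟩
        rw [mul_comm]; exact Nat.div_add_mod m k
      · omega
    · rintro ((h | ⟨⟨j, t⟩, ⟨⟨hj1, hjk⟩, ht⟩, rfl⟩) | ⟨h1, h2⟩)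
      · exact ⟨by omega, pat_lt_two (by omega) h⟩
      · show j*k + t < k*k ∧ pat k (j*k + t) = true
        replace hj1 : 1 ≤ j := hj1
        replace hjk : j < k := hjk
        replace ht : t < 5 := ht
        obtain ⟨hl, hr⟩ := hmid j t hj1 hjk ht
        refine ⟨by omega, pat_mid hl (by omega) ?_⟩
        rw [jk_mod, Nat.mod_eq_of_lt (by omega : t < k)]
        exact ht
      · exact ⟨h2, pat_tail h8 h1 h2⟩
  have hinj : Set.InjOn (fun p : ℕ × ℕ => p.1 * k + p.2)
      ((Finset.Ico 1 k ×ˢ Finset.range 5) : Finset (ℕ × ℕ)) := by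
    rintro ⟨j1, t1⟩ hm1 ⟨j2, t2⟩ hm2 he
    simp only [Finset.coe_product, Set.mem_prod, Finset.mem_coe, Finset.mem_Ico,
      Finset.mem_range] at hm1 hm2
    simp only at he
    have e1 : t1 = t2 := by
      have h := congrArg (· % k) he
      simp only [jk_mod] at h
      rwa [Nat.mod_eq_of_lt (by omega : t1 < k), Nat.mod_eq_of_lt (by omega : t2 < k)] at h
    have e2 : j1 * k = j2 * k := by omega
    have e3 : j1 = j2 := Nat.eq_of_mul_eq_mul_right hk0 e2
    simp [e1, e3]
  have hcim : ((Finset.Ico 1 k ×ˢ Finset.range 5).image (fun p => p.1 * k + p.2)).card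
      = (k-1) * 5 := by
    rw [Finset.card_image_of_injOn hinj, Finset.card_product, Nat.card_Ico, Finset.card_range]
  have hd1 : Disjoint (Finset.range 2)
      ((Finset.Ico 1 k ×ˢ Finset.range 5).image (fun p => p.1 * k + p.2)) := by
    rw [Finset.disjoint_left]
    intro m hm hm2
    simp only [Finset.mem_range] at hm
    simp only [Finset.mem_image, Finset.mem_product, Finset.mem_Ico, Finset.mem_range] at hm2
    obtain ⟨⟨j, t⟩, ⟨⟨hj1, hjk⟩, ht⟩, rfl⟩ := hm2
    replace hm : j*k + t < 2 := hm
    have := (hmid j t hj1 hjk ht).1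
    omega
  have hd2 : Disjoint
      (Finset.range 2 ∪ (Finset.Ico 1 k ×ˢ Finset.range 5).image (fun p => p.1 * k + p.2))
      (Finset.Ico (k*k - 3) (k*k)) := by
    rw [Finset.disjoint_left]
    intro m hm hm2
    simp only [Finset.mem_Ico] at hm2
    rcases Finset.mem_union.1 hm with h | h
    · simp only [Finset.mem_range] at h
      omega
    · simp only [Finset.mem_image, Finset.mem_product, Finset.mem_Ico, Finset.mem_range] at h
      obtain ⟨⟨j, t⟩, ⟨⟨hj1, hjk⟩, ht⟩, rfl⟩ := h
      replace hm2 : k*k - 3 ≤ j*k + t ∧ j*k + t < k*k := hm2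
      have := (hmid j t hj1 hjk ht).2
      omega
  rw [hset, Finset.card_union_of_disjoint hd2, Finset.card_union_of_disjoint hd1,
    hcim, Finset.card_range, Nat.card_Ico]
  omega

/-- The 1-sensitivity of the cyclic pattern function is at least `6k-2`. -/
theorem cycPatFn_sens1_lower {k n : ℕ} (h8 : 8 ≤ k) (hn : k ^ 2 ≤ n)
    (hpos : 0 < n) :
    6 * k - 2 ≤ sens1 (cycPatFn k n hpos) := by
  classical
  have hkk : k * k ≤ n := by rw [pow_two] at hn; exact hn
  have hk8 : 8*k ≤ k*k := Nat.mul_le_mul_right k h8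
  -- the witness input
  have hfx : cycPatFn k n hpos (fun j : Fin n => pat k j.val) = true := by
    simp only [cycPatFn, decide_eq_true_eq]
    refine ⟨0, ?_, ?_, ?_⟩
    · intro t ht
      show pat k ((0 + t) % n) = decide (t < 2)
      rw [Nat.zero_add, Nat.mod_eq_of_lt (by omega)]
      unfold pat
      rw [if_pos ht]
    · intro j hj1 hjk t ht
      show pat k ((0 + (j*k + t)) % n) = true
      have ha : 1*k ≤ j*k := Nat.mul_le_mul_right k hj1
      have hb : (j+1)*k ≤ k*k := Nat.mul_le_mul_right k (by omega)
      rw [add_one_mul] at hb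
      rw [Nat.zero_add, Nat.mod_eq_of_lt (by omega)]
      refine pat_mid (by omega) (by omega) ?_
      rw [jk_mod, Nat.mod_eq_of_lt (by omega : t < k)]
      omega
    · intro t ht3 htk
      show pat k ((0 + ((k-1)*k + t)) % n) = true
      have hsub : (k-1)*k = k*k - k := Nat.sub_one_mul k k
      rw [Nat.zero_add, Nat.mod_eq_of_lt (by omega)]
      exact pat_tail h8 (by omega) (by omega)
  -- the sensitive bits
  set CN : Finset ℕ :=
    ((Finset.range (k*k)).filter (fun m => pat k m = true)) ∪ Finset.Ico 2 k with hCNdef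
  have hCN : ∀ m ∈ CN, m < n := by
    intro m hm
    rcases Finset.mem_union.1 hm with h | h
    · have := (Finset.mem_filter.1 h).1
      simp only [Finset.mem_range] at this
      omega
    · simp only [Finset.mem_Ico] at h
      omega
  have hCNcard : CN.card = 6*k - 2 := by
    have hdisj : Disjoint ((Finset.range (k*k)).filter (fun m => pat k m = true))
        (Finset.Ico 2 k) := by
      rw [Finset.disjoint_left]
      intro m hm hm2
      simp only [Finset.mem_Ico] at hm2
      have := (Finset.mem_filter.1 hm).2
      rw [pat_b1_false hm2.1 hm2.2] at this
      cases this
    rw [hCNdef, Finset.card_union_of_disjoint hdisj, card_pat h8, Nat.card_Ico]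
    omega
  have hsens : ∀ j : Fin n, pat k j.val = true ∨ (2 ≤ j.val ∧ j.val < k) →
      cycPatFn k n hpos (flipBit (fun j : Fin n => pat k j.val) j)
        ≠ cycPatFn k n hpos (fun j : Fin n => pat k j.val) := by
    intro j hj
    rw [hfx]
    rcases hj with h | ⟨h1, h2⟩
    · rw [flip_one_false h8 hkk hpos j h]; simp
    · rw [flip_zero_false h8 hkk hpos j h1 h2]; simp
  have hmain : CN.card ≤ sensAt (cycPatFn k n hpos) (fun j : Fin n => pat k j.val) := by
    unfold sensAt
    apply Finset.card_le_card_of_injOn (fun m => (⟨m % n, Nat.mod_lt _ hpos⟩ : Fin n))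
    · intro m hm
      have hmn : m < n := hCN m hm
      refine Finset.mem_filter.2 ⟨Finset.mem_univ _, ?_⟩
      apply hsens
      have hval : ((⟨m % n, Nat.mod_lt _ hpos⟩ : Fin n) : ℕ) = m := Nat.mod_eq_of_lt hmn
      rw [hval]
      rcases Finset.mem_union.1 hm with h | h
      · exact Or.inl (Finset.mem_filter.1 h).2
      · simp only [Finset.mem_Ico] at h
        exact Or.inr h
    · intro a ha b hb hab
      have h1 : a % n = b % n := congrArg Fin.val hab
      rwa [Nat.mod_eq_of_lt (hCN a ha), Nat.mod_eq_of_lt (hCN b hb)] at h1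
  have hx1 : (fun j : Fin n => pat k j.val) ∈
      Finset.univ.filter (fun z => cycPatFn k n hpos z = true) :=
    Finset.mem_filter.2 ⟨Finset.mem_univ _, hfx⟩
  calc 6*k - 2 = CN.card := hCNcard.symm
    _ ≤ sensAt (cycPatFn k n hpos) (fun j : Fin n => pat k j.val) := hmain
    _ ≤ sens1 (cycPatFn k n hpos) := Finset.le_sup hx1
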